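/- For every real number p ≥ 2, ln(2p-1) ≥ (p-1)·ln((p+1)/(p-1)); equivalently, p^{p-2}·(p-1)^{1-p} ≤ p^{p-2}·(2p-1)·(p+1)^{1-p}. -/

import Mathlib

open Real Filter Set

noncomputable def hfun (p : ℝ) : ℝ :=
  2 / (2 * p - 1) + 2 / (p + 1) - (Real.log (p + 1) - Real.log (p - 1))

noncomputable def gfun (p : ℝ) : ℝ :=
  Real.log (2 * p - 1) - (p - 1) * (Real.log (p + 1) - Real.log (p - 1))

lemma hasDerivAt_hfun (x : ℝ) (hx : 1 < x) :
    HasDerivAt hfun (4 / ((x - 1) * (x + 1) ^ 2) - 4 / (2 * x - 1) ^ 2) x := by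
  have h1 : (2 * x - 1) ≠ 0 := by nlinarith
  have h2 : (x + 1) ≠ 0 := by nlinarith
  have h3 : (x - 1) ≠ 0 := by nlinarith
  have d1 : HasDerivAt (fun p : ℝ => 2 * p - 1) 2 x := by
    simpa using ((hasDerivAt_id x).const_mul 2).sub_const 1
  have d2 : HasDerivAt (fun p : ℝ => p + 1) 1 x := (hasDerivAt_id x).add_const 1
  have d3 : HasDerivAt (fun p : ℝ => p - 1) 1 x := (hasDerivAt_id x).sub_const 1
  have e1 : HasDerivAt (fun p : ℝ => 2 / (2 * p - 1))
      ((0 * (2 * x - 1) - 2 * 2) / (2 * x - 1) ^ 2) x :=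
    (hasDerivAt_const x 2).div d1 h1
  have e2 : HasDerivAt (fun p : ℝ => 2 / (p + 1))
      ((0 * (x + 1) - 2 * 1) / (x + 1) ^ 2) x :=
    (hasDerivAt_const x 2).div d2 h2
  have e3 : HasDerivAt (fun p : ℝ => Real.log (p + 1)) (1 / (x + 1)) x := d2.log h2
  have e4 : HasDerivAt (fun p : ℝ => Real.log (p - 1)) (1 / (x - 1)) x := d3.log h3
  have := (e1.add e2).sub (e3.sub e4)
  refine this.congr_deriv ?_
  field_simp
  ring

lemma hasDerivAt_gfun (x : ℝ) (hx : 1 < x) : HasDerivAt gfun (hfun x) x := by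
  have h1 : (2 * x - 1) ≠ 0 := by nlinarith
  have h2 : (x + 1) ≠ 0 := by nlinarith
  have h3 : (x - 1) ≠ 0 := by nlinarith
  have d1 : HasDerivAt (fun p : ℝ => 2 * p - 1) 2 x := by
    simpa using ((hasDerivAt_id x).const_mul 2).sub_const 1
  have d2 : HasDerivAt (fun p : ℝ => p + 1) 1 x := (hasDerivAt_id x).add_const 1
  have d3 : HasDerivAt (fun p : ℝ => p - 1) 1 x := (hasDerivAt_id x).sub_const 1
  have e0 : HasDerivAt (fun p : ℝ => Real.log (2 * p - 1)) (2 / (2 * x - 1)) x :=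
    d1.log h1
  have e3 : HasDerivAt (fun p : ℝ => Real.log (p + 1)) (1 / (x + 1)) x := d2.log h2
  have e4 : HasDerivAt (fun p : ℝ => Real.log (p - 1)) (1 / (x - 1)) x := d3.log h3
  have e5 : HasDerivAt (fun p : ℝ => (p - 1) * (Real.log (p + 1) - Real.log (p - 1)))
      (1 * (Real.log (x + 1) - Real.log (x - 1)) + (x - 1) * (1 / (x + 1) - 1 / (x - 1))) x :=
    d3.mul (e3.sub e4)
  have := e0.sub e5
  refine this.congr_deriv ?_
  unfold hfun
  field_simp
  ring

lemma hfun_tendsto : Tendsto hfun atTop (nhds 0) := by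
  have t1 : Tendsto (fun p : ℝ => 2 / (2 * p - 1)) atTop (nhds 0) := by
    apply Tendsto.div_atTop tendsto_const_nhds
    apply tendsto_atTop_add_const_right
    exact (tendsto_id.const_mul_atTop two_pos)
  have t2 : Tendsto (fun p : ℝ => 2 / (p + 1)) atTop (nhds 0) := by
    apply Tendsto.div_atTop tendsto_const_nhds
    exact tendsto_atTop_add_const_right _ 1 tendsto_id
  have t3 : Tendsto (fun p : ℝ => Real.log (p + 1) - Real.log (p - 1)) atTop (nhds 0) := by
    have hq : Tendsto (fun p : ℝ => (p + 1) / (p - 1)) atTop (nhds 1) := by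
      have h0 : Tendsto (fun p : ℝ => 1 + 2 / (p - 1)) atTop (nhds 1) := by
        have : Tendsto (fun p : ℝ => 2 / (p - 1)) atTop (nhds 0) := by
          apply Tendsto.div_atTop tendsto_const_nhds
          exact tendsto_atTop_add_const_right _ (-1) tendsto_id
        simpa using (tendsto_const_nhds (x := (1:ℝ))).add this
      apply h0.congr'
      filter_upwards [eventually_gt_atTop (1:ℝ)] with p hp
      have : p - 1 ≠ 0 := by linarith
      field_simp
      ring
    have hcont : Tendsto (fun p : ℝ => Real.log ((p + 1) / (p - 1))) atTop (nhds 0) := by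
      have := (Real.continuousAt_log (one_ne_zero)).tendsto.comp hq
      simpa [Function.comp_def] using this
    apply hcont.congr'
    filter_upwards [eventually_gt_atTop (1:ℝ)] with p hp
    rw [Real.log_div (by linarith) (by linarith)]
  have := (t1.add t2).sub t3
  unfold hfun
  simpa using this

lemma hfun_antitone : AntitoneOn hfun (Set.Ici 2) := by
  apply antitoneOn_of_deriv_nonpos (convex_Ici 2)
  · intro x hx
    have hx1 : (1:ℝ) < x := by simp at hx; linarith
    exact (hasDerivAt_hfun x hx1).continuousAt.continuousWithinAt
  · intro x hx
    rw [interior_Ici] at hx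
    have hx1 : (1:ℝ) < x := by simp at hx; linarith
    exact (hasDerivAt_hfun x hx1).differentiableAt.differentiableWithinAt
  · intro x hx
    rw [interior_Ici] at hx
    have hx2 : (2:ℝ) < x := hx
    have hx1 : (1:ℝ) < x := by linarith
    rw [(hasDerivAt_hfun x hx1).deriv]
    have hA : (0:ℝ) < (2 * x - 1) ^ 2 := by nlinarith
    have hle : (2 * x - 1) ^ 2 ≤ (x - 1) * (x + 1) ^ 2 := by nlinarith
    have : 4 / ((x - 1) * (x + 1) ^ 2) ≤ 4 / (2 * x - 1) ^ 2 :=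
      div_le_div_of_nonneg_left (by norm_num) hA hle
    linarith

lemma hfun_nonneg (x : ℝ) (hx : 2 ≤ x) : 0 ≤ hfun x := by
  apply le_of_tendsto hfun_tendsto
  filter_upwards [eventually_ge_atTop x] with q hq
  exact hfun_antitone hx (le_trans hx hq) hq

lemma gfun_mono : MonotoneOn gfun (Set.Ici 2) := by
  apply monotoneOn_of_deriv_nonneg (convex_Ici 2)
  · intro x hx
    have hx1 : (1:ℝ) < x := by simp at hx; linarith
    exact (hasDerivAt_gfun x hx1).continuousAt.continuousWithinAt
  · intro x hx
    rw [interior_Ici] at hx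
    have hx1 : (1:ℝ) < x := by simp at hx; linarith
    exact (hasDerivAt_gfun x hx1).differentiableAt.differentiableWithinAt
  · intro x hx
    rw [interior_Ici] at hx
    have hx1 : (1:ℝ) < x := by simp at hx; linarith
    rw [(hasDerivAt_gfun x hx1).deriv]
    exact hfun_nonneg x (le_of_lt hx)

theorem stmt2 (p : ℝ) (hp : 2 ≤ p) :
    Real.log (2 * p - 1) ≥ (p - 1) * Real.log ((p + 1) / (p - 1)) ∧
    p ^ (p - 2) * (p - 1) ^ (1 - p) ≤ p ^ (p - 2) * (2 * p - 1) * (p + 1) ^ (1 - p) := by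
  have hp1 : (0:ℝ) < p - 1 := by linarith
  have hp2 : (0:ℝ) < p + 1 := by linarith
  have hp3 : (0:ℝ) < 2 * p - 1 := by linarith
  have hg2 : gfun 2 = 0 := by
    unfold gfun
    norm_num
  have hkey : 0 ≤ gfun p := by
    have := gfun_mono (Set.self_mem_Ici) (Set.mem_Ici.mpr hp) hp
    rwa [hg2] at this
  unfold gfun at hkey
  have key : (p - 1) * (Real.log (p + 1) - Real.log (p - 1)) ≤ Real.log (2 * p - 1) := by
    linarith
  constructor
  · rw [Real.log_div (ne_of_gt hp2) (ne_of_gt hp1)]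
    exact key
  · rw [mul_assoc]
    apply mul_le_mul_of_nonneg_left _ (Real.rpow_nonneg (by linarith) _)
    rw [Real.rpow_def_of_pos hp1, Real.rpow_def_of_pos hp2,
      show (2 * p - 1) = Real.exp (Real.log (2 * p - 1)) from (Real.exp_log hp3).symm,
      ← Real.exp_add, Real.exp_le_exp]
    nlinarith [key]
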